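/- Over a field k of characteristic ≠ 2, the 4-dimensional commutative algebra with nonzero products a'² = c', b'² = -c', a'∘c' = d', b'∘c' = d', a'∘b' = d' is isomorphic to the algebra J₄,₉ with nonzero products a∘b = c, a∘c = d, b² = d, via the map a' ↦ a - b - c/2, b' ↦ a + b - c/2, c' ↦ -2c, d' ↦ -2d. -/

import Mathlib

/-- Over a field `k` of characteristic ≠ 2, the 4-dimensional algebra `J₄`
(with `a'² = c'`, `b'² = -c'`, `a'∘c' = d'`, `b'∘c' = d'`, `a'∘b' = d'`) is
isomorphic to `J₄,₉` (with `a∘b = c`, `a∘c = d`, `b² = d`) via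
`a' ↦ a - b - c/2`, `b' ↦ a + b - c/2`, `c' ↦ -2c`, `d' ↦ -2d`. -/
theorem stmt_11 {k : Type*} [Field k] (hchar : (2 : k) ≠ 0) :
    let mul1 : (Fin 4 → k) → (Fin 4 → k) → (Fin 4 → k) := fun x y =>
      ![0, 0, x 0 * y 0 - x 1 * y 1,
        x 0 * y 2 + x 2 * y 0 + x 1 * y 2 + x 2 * y 1 + x 0 * y 1 + x 1 * y 0]
    let mul2 : (Fin 4 → k) → (Fin 4 → k) → (Fin 4 → k) := fun x y =>
      ![0, 0, x 0 * y 1 + x 1 * y 0, x 0 * y 2 + x 2 * y 0 + x 1 * y 1]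
    let φ : (Fin 4 → k) → (Fin 4 → k) := fun x =>
      ![x 0 + x 1, -x 0 + x 1, -(x 0) / 2 - x 1 / 2 - 2 * x 2, -2 * x 3]
    (∀ x y, φ (x + y) = φ x + φ y) ∧
    (∀ (c : k) (x), φ (c • x) = c • φ x) ∧
    Function.Bijective φ ∧
    (∀ x y, φ (mul1 x y) = mul2 (φ x) (φ y)) := by
  intro mul1 mul2 φ
  have h2 : (2:k) ≠ 0 := hchar
  have h4 : (4:k) ≠ 0 := by
    have : (4:k) = 2 * 2 := by norm_num
    rw [this]; exact mul_ne_zero h2 h2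
  refine ⟨?_, ?_, ?_, ?_⟩
  · intro x y
    funext i
    fin_cases i <;> simp [φ] <;> ring
  · intro c x
    funext i
    fin_cases i <;> simp [φ] <;> ring
  · constructor
    · intro x y h
      have h0 := congrFun h 0
      have h1 := congrFun h 1
      have h2' := congrFun h 2
      have h3 := congrFun h 3
      simp [φ] at h0 h1 h2' h3
      have e0 : x 0 = y 0 := mul_left_cancel₀ h2 (by linear_combination h0 - h1)
      have e1 : x 1 = y 1 := mul_left_cancel₀ h2 (by linear_combination h0 + h1)
      have e2 : x 2 = y 2 := by
        have h8 : (8:k) ≠ 0 := by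
          have : (8:k) = 2 * 4 := by norm_num
          rw [this]; exact mul_ne_zero h2 h4
        field_simp at h2'
        exact mul_left_cancel₀ h8 (by linear_combination -2 * h2' - 2 * e0 - 2 * e1)
      have e3 : x 3 = y 3 := by
        rcases h3 with h | h
        · exact h
        · exact absurd h h2
      funext i
      fin_cases i <;> assumption
    · intro y
      refine ⟨![y 0 / 2 - y 1 / 2, y 0 / 2 + y 1 / 2, -(y 0)/4 - y 2/2, -(y 3)/2], ?_⟩
      funext i
      fin_cases i <;> (simp [φ]; try field_simp; try ring)
  · intro x y
    funext i
    fin_cases i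
    · simp [φ, mul1, mul2]
    · simp [φ, mul1, mul2]
    · simp [φ, mul1, mul2]; ring
    · simp [φ, mul1, mul2]; field_simp; ring
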